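/- For every integer m ≥ 2 and every ε > 0, there exist a finite type set T with |T| = m, a finite outcome set O, and a valuation v : T × O → ℝ≥0, together with a mechanism M that is ε-BIC (and also ε-EEIC) and IR with respect to the uniform distribution f on T, such that every mechanism M' on the same data that is BIC and IR and satisfies W(M') ≥ W(M) must satisfy R(M') ≤ R(M) − (m−1)·ε/2. In particular, any welfare-preserving ε-BIC-to-BIC transformation must suffer revenue loss Ω(m·ε). -/

import Mathlib

open Finset

-- auxiliary: valuation
noncomputable def Vv (m : ℕ) (ε : ℝ) (t o : Fin m) : ℝ :=
  if (o:ℕ) = (t:ℕ) then (2*(t:ℕ)+1)*ε else if (o:ℕ)+1 = (t:ℕ) then (2*(t:ℕ))*ε else 0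

lemma Vv_nonneg (m : ℕ) (ε : ℝ) (hε : 0 ≤ ε) (t o : Fin m) : 0 ≤ Vv m ε t o := by
  unfold Vv; split_ifs <;> positivity

lemma Vv_self (m : ℕ) (ε : ℝ) (t : Fin m) : Vv m ε t t = (2*(t:ℕ)+1)*ε := by
  simp [Vv]

lemma Vv_le (m : ℕ) (ε : ℝ) (hε : 0 ≤ ε) (t o : Fin m) :
    Vv m ε t o ≤ (2*(t:ℕ)+1)*ε := by
  unfold Vv; split_ifs <;> nlinarith [t.2]

lemma Vv_le' (m : ℕ) (ε : ℝ) (hε : 0 ≤ ε) (t o : Fin m) (h : o ≠ t) :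
    Vv m ε t o ≤ (2*(t:ℕ))*ε := by
  unfold Vv
  split_ifs with h1 h2
  · exact absurd (Fin.ext h1) h
  · exact le_refl _
  · exact mul_nonneg (by positivity) hε

lemma sum_ind (m : ℕ) (ε : ℝ) (t t' : Fin m) :
    ∑ o, (if o = t' then (1:ℝ) else 0) * Vv m ε t o = Vv m ε t t' := by
  simp [ite_mul, Finset.sum_ite_eq']

/-- Lower bound on revenue loss (single agent, uniform distribution):
for every `m ≥ 2` and `ε > 0` there is an instance (type set `Fin m`, outcome set
`Fin k`, valuation `v`) and an `ε`-BIC, `ε`-EEIC and IR mechanism `(x, p)` such that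
every BIC and IR mechanism `(x', p')` preserving social welfare loses at least
`(m−1)·ε/2` revenue. -/
theorem lower_bound_revenue_loss_single_agent
    (m : ℕ) (hm : 2 ≤ m) (ε : ℝ) (hε : 0 < ε) :
    ∃ (k : ℕ) (v : Fin m → Fin k → ℝ) (x : Fin m → Fin k → ℝ) (p : Fin m → ℝ),
      (∀ t o, 0 ≤ v t o) ∧
      (∀ t o, 0 ≤ x t o) ∧ (∀ t, ∑ o, x t o = 1) ∧ (∀ t, 0 ≤ p t) ∧
      -- M is ε-BIC
      (∀ t t' : Fin m,
        (∑ o, x t o * v t o) - p t ≥ (∑ o, x t' o * v t o) - p t' - ε) ∧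
      -- M is ε-EEIC (w.r.t. the uniform distribution)
      (∑ t, (1 / (m : ℝ)) *
        ((Finset.univ.sup' (Finset.univ_nonempty_iff.mpr ⟨⟨0, by omega⟩⟩)
            fun t' => (∑ o, x t' o * v t o) - p t')
          - ((∑ o, x t o * v t o) - p t)) ≤ ε) ∧
      -- M is IR
      (∀ t : Fin m, 0 ≤ (∑ o, x t o * v t o) - p t) ∧
      -- every welfare-preserving BIC and IR mechanism loses at least (m−1)·ε/2 revenue
      (∀ (x' : Fin m → Fin k → ℝ) (p' : Fin m → ℝ),
        (∀ t o, 0 ≤ x' t o) → (∀ t, ∑ o, x' t o = 1) → (∀ t, 0 ≤ p' t) →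
        (∀ t t' : Fin m,
          (∑ o, x' t o * v t o) - p' t ≥ (∑ o, x' t' o * v t o) - p' t') →
        (∀ t : Fin m, 0 ≤ (∑ o, x' t o * v t o) - p' t) →
        (∑ t, (1 / (m : ℝ)) * ∑ o, x' t o * v t o)
          ≥ (∑ t, (1 / (m : ℝ)) * ∑ o, x t o * v t o) →
        (∑ t, (1 / (m : ℝ)) * p' t)
          ≤ (∑ t, (1 / (m : ℝ)) * p t) - ((m : ℝ) - 1) * ε / 2) := by
  refine ⟨m, Vv m ε, fun t o => if o = t then 1 else 0, fun t => (2*(t:ℕ)+1)*ε,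
    fun t o => Vv_nonneg m ε hε.le t o,
    fun t o => by dsimp only; split_ifs <;> norm_num,
    fun t => by simp,
    fun t => by positivity, ?_, ?_, ?_, ?_⟩
  · -- ε-BIC
    intro t t'
    rw [sum_ind, sum_ind, Vv_self]
    have h := Vv_le m ε hε.le t t'
    -- goal: (2t+1)ε - (2t+1)ε ≥ Vv t t' - (2t'+1)ε - ε
    have hb : Vv m ε t t' - (2*(t':ℕ)+1)*ε ≤ ε := by
      unfold Vv
      split_ifs with h1 h2
      · have h1' : ((t:ℕ):ℝ) = ((t':ℕ):ℝ) := by exact_mod_cast h1.symm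
        rw [h1']; linarith
      · have h2' : ((t:ℕ):ℝ) = ((t':ℕ):ℝ)+1 := by exact_mod_cast h2.symm
        rw [h2']; nlinarith
      · nlinarith [mul_nonneg (by positivity : (0:ℝ) ≤ 2*(t':ℕ)+1) hε.le]
    dsimp only
    linarith
  · -- ε-EEIC
    have hb : ∀ t : Fin m,
        (Finset.univ.sup' (Finset.univ_nonempty_iff.mpr ⟨⟨0, by omega⟩⟩)
          fun t' => (∑ o, (if o = t' then (1:ℝ) else 0) * Vv m ε t o) - (2*(t':ℕ)+1)*ε) ≤ ε := by
      intro t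
      apply Finset.sup'_le
      intro t' _
      rw [sum_ind]
      unfold Vv
      split_ifs with h1 h2
      · have h1' : ((t:ℕ):ℝ) = ((t':ℕ):ℝ) := by exact_mod_cast h1.symm
        rw [h1']; linarith
      · have h2' : ((t:ℕ):ℝ) = ((t':ℕ):ℝ)+1 := by exact_mod_cast h2.symm
        rw [h2']; nlinarith
      · nlinarith [mul_nonneg (by positivity : (0:ℝ) ≤ 2*(t':ℕ)+1) hε.le]
    calc ∑ t : Fin m, (1 / (m : ℝ)) *
          ((Finset.univ.sup' (Finset.univ_nonempty_iff.mpr ⟨⟨0, by omega⟩⟩)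
            fun t' => (∑ o, (if o = t' then (1:ℝ) else 0) * Vv m ε t o) - (2*(t':ℕ)+1)*ε)
          - ((∑ o, (if o = t then (1:ℝ) else 0) * Vv m ε t o) - (2*(t:ℕ)+1)*ε))
        ≤ ∑ t : Fin m, (1 / (m : ℝ)) * ε := by
          apply Finset.sum_le_sum
          intro t _
          have h0 : (∑ o, (if o = t then (1:ℝ) else 0) * Vv m ε t o) - (2*(t:ℕ)+1)*ε = 0 := by
            rw [sum_ind, Vv_self]; ring
          rw [h0]
          have := hb t
          have hm0 : (0:ℝ) ≤ 1 / (m:ℝ) := by positivity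
          nlinarith
      _ = ε := by
          rw [Finset.sum_const, Finset.card_univ, Fintype.card_fin, nsmul_eq_mul]
          field_simp
  · -- IR
    intro t
    rw [sum_ind, Vv_self]
    dsimp only
    linarith
  · -- lower bound
    intro x' p' hx'0 hx'1 hp'0 hBIC hIR hW
    have hm0 : (0:ℝ) < (m:ℝ) := by positivity
    -- pointwise welfare upper bound
    have hwle : ∀ t : Fin m, ∑ o, x' t o * Vv m ε t o ≤ (2*(t:ℕ)+1)*ε := by
      intro t
      calc ∑ o, x' t o * Vv m ε t o ≤ ∑ o, x' t o * ((2*(t:ℕ)+1)*ε) := by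
            apply Finset.sum_le_sum; intro o _
            exact mul_le_mul_of_nonneg_left (Vv_le m ε hε.le t o) (hx'0 t o)
        _ = (2*(t:ℕ)+1)*ε := by rw [← Finset.sum_mul, hx'1 t, one_mul]
    -- welfare hypothesis rewritten
    have hW' : ∑ t : Fin m, (1/(m:ℝ)) * ((2*(t:ℕ)+1)*ε)
        ≤ ∑ t : Fin m, (1/(m:ℝ)) * ∑ o, x' t o * Vv m ε t o := by
      have := hW
      simp only [sum_ind, Vv_self] at this
      exact this
    -- pointwise welfare equality
    have heq : ∀ t : Fin m, ∑ o, x' t o * Vv m ε t o = (2*(t:ℕ)+1)*ε := by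
      have hle : ∀ t ∈ (Finset.univ : Finset (Fin m)),
          (1/(m:ℝ)) * (∑ o, x' t o * Vv m ε t o) ≤ (1/(m:ℝ)) * ((2*(t:ℕ)+1)*ε) := by
        intro t _
        exact mul_le_mul_of_nonneg_left (hwle t) (by positivity)
      have hsums : ∑ t : Fin m, (1/(m:ℝ)) * (∑ o, x' t o * Vv m ε t o)
          = ∑ t : Fin m, (1/(m:ℝ)) * ((2*(t:ℕ)+1)*ε) :=
        le_antisymm (Finset.sum_le_sum hle) hW'
      have hpt := (Finset.sum_eq_sum_iff_of_le hle).mp hsums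
      intro t
      have := hpt t (Finset.mem_univ t)
      have hne : (1/(m:ℝ)) ≠ 0 := by positivity
      exact mul_left_cancel₀ hne this
    -- x' is the identity allocation
    have hxtt : ∀ t : Fin m, x' t t = 1 := by
      intro t
      have hle1 : x' t t ≤ 1 := by
        have h := Finset.single_le_sum (f := x' t) (fun o _ => hx'0 t o) (Finset.mem_univ t)
        rw [hx'1 t] at h; exact h
      have hsplit : x' t t * Vv m ε t t + ∑ o ∈ Finset.univ.erase t, x' t o * Vv m ε t o
          = ∑ o, x' t o * Vv m ε t o :=
        Finset.add_sum_erase _ (fun o => x' t o * Vv m ε t o) (Finset.mem_univ t)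
      have herle : ∑ o ∈ Finset.univ.erase t, x' t o * Vv m ε t o
          ≤ ∑ o ∈ Finset.univ.erase t, x' t o * ((2*(t:ℕ))*ε) := by
        apply Finset.sum_le_sum; intro o ho
        exact mul_le_mul_of_nonneg_left
          (Vv_le' m ε hε.le t o (Finset.ne_of_mem_erase ho)) (hx'0 t o)
      have hersum : ∑ o ∈ Finset.univ.erase t, x' t o = 1 - x' t t := by
        have h := Finset.add_sum_erase Finset.univ (x' t) (Finset.mem_univ t)
        rw [hx'1 t] at h; linarith
      rw [← Finset.sum_mul, hersum] at herle
      rw [Vv_self] at hsplit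
      have := heq t
      nlinarith
    have hxzero : ∀ (t o : Fin m), o ≠ t → x' t o = 0 := by
      intro t o ho
      have hersum : ∑ o ∈ Finset.univ.erase t, x' t o = 0 := by
        have h := Finset.add_sum_erase Finset.univ (x' t) (Finset.mem_univ t)
        rw [hx'1 t, hxtt t] at h; linarith
      have := (Finset.sum_eq_zero_iff_of_nonneg (fun o _ => hx'0 t o)).mp hersum
      exact this o (Finset.mem_erase.mpr ⟨ho, Finset.mem_univ o⟩)
    have hsum' : ∀ t t' : Fin m, ∑ o, x' t' o * Vv m ε t o = Vv m ε t t' := by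
      intro t t'
      rw [Finset.sum_eq_single t']
      · rw [hxtt t', one_mul]
      · intro o _ ho; rw [hxzero t' o ho, zero_mul]
      · intro h; exact absurd (Finset.mem_univ t') h
    -- utility lower bound by induction
    have hu : ∀ n : ℕ, ∀ hn : n < m, (n:ℝ)*ε ≤ (2*(n:ℕ)+1)*ε - p' ⟨n,hn⟩ := by
      intro n
      induction n with
      | zero =>
        intro hn
        have := hIR ⟨0,hn⟩
        rw [heq ⟨0,hn⟩] at this
        simpa using this
      | succ n ih =>
        intro hn
        have hn' : n < m := by omega
        have hbic := hBIC ⟨n+1,hn⟩ ⟨n,hn'⟩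
        rw [heq ⟨n+1,hn⟩, hsum'] at hbic
        have hv : Vv m ε ⟨n+1,hn⟩ ⟨n,hn'⟩ = (2*((n:ℝ)+1))*ε := by
          unfold Vv
          split_ifs with h1 h2
          · simp at h1
          · push_cast; ring
          · simp at h2
        rw [hv] at hbic
        have hih := ih hn'
        simp only [Fin.val_mk] at hbic ⊢
        push_cast at hbic hih ⊢
        linarith
    -- summation
    have hS : ∑ t : Fin m, ((t:ℕ):ℝ) = (m:ℝ)*((m:ℝ)-1)/2 := by
      have h2 := Finset.sum_range_id_mul_two m
      have h2' := congrArg (Nat.cast : ℕ → ℝ) h2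
      push_cast [Nat.cast_sub (by omega : 1 ≤ m)] at h2'
      rw [Fin.sum_univ_eq_sum_range (fun i => ((i:ℕ):ℝ)) m]
      linarith
    have hstep : ∑ t : Fin m, (1/(m:ℝ)) * p' t
        ≤ ∑ t : Fin m, (1/(m:ℝ)) * ((2*(t:ℕ)+1)*ε - ((t:ℕ):ℝ)*ε) := by
      apply Finset.sum_le_sum
      intro t _
      apply mul_le_mul_of_nonneg_left _ (by positivity : (0:ℝ) ≤ 1/(m:ℝ))
      have := hu (t:ℕ) t.2
      simp only [Fin.eta] at this
      linarith
    have hexp : ∑ t : Fin m, (1/(m:ℝ)) * ((2*(t:ℕ)+1)*ε - ((t:ℕ):ℝ)*ε)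
        = (∑ t : Fin m, (1/(m:ℝ)) * ((2*(t:ℕ)+1)*ε)) - (1/(m:ℝ)) * ε * ∑ t : Fin m, ((t:ℕ):ℝ) := by
      rw [Finset.mul_sum, ← Finset.sum_sub_distrib]
      apply Finset.sum_congr rfl
      intro t _
      ring
    have hfin : (1/(m:ℝ)) * ε * ((m:ℝ)*((m:ℝ)-1)/2) = ((m:ℝ) - 1) * ε / 2 := by
      field_simp
    dsimp only
    rw [hexp, hS, hfin] at hstep
    exact hstep
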